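/- Let X be a compact Hausdorff space that is not scattered, K = ker(X) its perfect kernel, and A a closed subalgebra of C(X) separating points and containing constants. Let K̃ = ⋂{H clopen : χ_H ∈ A, K ⊆ H}. Then the Šilov boundary of A↾K̃ is contained in K; equivalently, K is a boundary for A↾K̃: for every f ∈ A, sup_{K̃}|f| = sup_K |f|. -/

import Mathlib

open Classical Set

/-- `χ_H ∈ A`. -/
noncomputable def chiMem {X : Type*} [TopologicalSpace X]
    (A : Subalgebra ℂ C(X, ℂ)) (H : Set X) : Prop :=
  ∃ g ∈ A, ∀ x, g x = if x ∈ H then (1 : ℂ) else 0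

/-- Compatibility: the complex absolute value as a bundled absolute value. -/
noncomputable def Complex.abs : AbsoluteValue ℂ ℝ where
  toFun z := ‖z‖
  map_mul' := norm_mul
  nonneg' := norm_nonneg
  eq_zero' _ := norm_eq_zero
  add_le' := norm_add_le

theorem Complex.abs_apply (z : ℂ) : Complex.abs z = Real.sqrt (Complex.normSq z) := Complex.norm_def z

theorem Complex.norm_eq_abs (z : ℂ) : ‖z‖ = Complex.abs z := rfl

@[simp]
theorem Complex.abs_ofReal (r : ℝ) : Complex.abs (r : ℂ) = |r| := by
  rw [← Complex.norm_eq_abs, Complex.norm_real, Real.norm_eq_abs]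

@[continuity, fun_prop]
theorem Complex.continuous_abs : Continuous Complex.abs := continuous_norm

@[simp]
theorem Complex.abs_conj (z : ℂ) : Complex.abs ((starRingEnd ℂ) z) = Complex.abs z :=
  Complex.norm_conj z

@[simp]
theorem Complex.abs_exp_ofReal_mul_I (x : ℝ) : Complex.abs (Complex.exp (x * Complex.I)) = 1 :=
  Complex.norm_exp_ofReal_mul_I x

theorem Complex.abs_im_le_abs (z : ℂ) : |z.im| ≤ Complex.abs z := Complex.abs_im_le_norm z

theorem Complex.re_le_abs (z : ℂ) : z.re ≤ Complex.abs z := Complex.re_le_norm z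

theorem Complex.sq_abs (z : ℂ) : Complex.abs z ^ 2 = Complex.normSq z := Complex.sq_norm z

theorem Complex.normSq_eq_abs (z : ℂ) : Complex.normSq z = Complex.abs z ^ 2 :=
  Complex.normSq_eq_norm_sq z

set_option maxHeartbeats 1000000

section RinvSec
open Complex Filter Topology Polynomial
variable {X : Type*} [TopologicalSpace X] [CompactSpace X]

/-- `(λ - h)⁻¹` exists in `A` (expressed pointwise). -/
def Rinv (A : Subalgebra ℂ C(X, ℂ)) (h : C(X, ℂ)) (lam : ℂ) : Prop :=
  ∃ u ∈ A, ∀ x, (lam - h x) * u x = 1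

variable {A : Subalgebra ℂ C(X, ℂ)} {h : C(X, ℂ)}

lemma geom_mem (hAcl : IsClosed (A : Set C(X, ℂ))) {c : C(X, ℂ)} (hcA : c ∈ A)
    (hc : ‖c‖ < 1) : ∃ v ∈ A, (1 - c) * v = 1 := by
  have hsum : Summable (fun n : ℕ => c ^ n) := summable_geometric_of_norm_lt_one hc
  refine ⟨∑' n : ℕ, c ^ n, ?_, mul_neg_geom_series c hc⟩
  refine hAcl.mem_of_tendsto hsum.hasSum.tendsto_sum_nat ?_
  exact Filter.Eventually.of_forall fun n => Subalgebra.sum_mem A fun i _ => pow_mem hcA i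

lemma rinv_of_norm_lt (hAcl : IsClosed (A : Set C(X, ℂ))) (hh : h ∈ A) {lam : ℂ}
    (hl : ‖h‖ < Complex.abs lam) : Rinv A h lam := by
  have hlam0 : lam ≠ 0 := by
    intro h0
    rw [h0] at hl; simp at hl
    exact absurd hl (not_lt.2 (norm_nonneg _))
  set c : C(X, ℂ) := lam⁻¹ • h with hc_def
  have hcA : c ∈ A := Subalgebra.smul_mem A hh _
  have hc : ‖c‖ < 1 := by
    rw [hc_def, norm_smul]
    have : ‖lam⁻¹‖ = (Complex.abs lam)⁻¹ := by simp [Complex.norm_eq_abs]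
    rw [this]
    have habs : 0 < Complex.abs lam := lt_of_le_of_lt (norm_nonneg h) hl
    rw [inv_mul_lt_iff₀ habs, mul_one]
    exact hl
  obtain ⟨v, hvA, hv⟩ := geom_mem hAcl hcA hc
  refine ⟨lam⁻¹ • v, Subalgebra.smul_mem A hvA _, fun x => ?_⟩
  have h1 := DFunLike.congr_fun hv x
  simp only [ContinuousMap.mul_apply, ContinuousMap.sub_apply, ContinuousMap.one_apply,
    ContinuousMap.smul_apply, smul_eq_mul, hc_def] at h1 ⊢
  field_simp at h1 ⊢
  linear_combination h1

lemma rinv_perturb (hAcl : IsClosed (A : Set C(X, ℂ))) {lam : ℂ} {u : C(X, ℂ)}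
    (huA : u ∈ A) (hu : ∀ x, (lam - h x) * u x = 1) {mu : ℂ}
    (hmu : Complex.abs (lam - mu) * ‖u‖ < 1) : Rinv A h mu := by
  set c : C(X, ℂ) := (lam - mu) • u with hc_def
  have hcA : c ∈ A := Subalgebra.smul_mem A huA _
  have hc : ‖c‖ < 1 := by
    rw [hc_def, norm_smul, Complex.norm_eq_abs]; exact hmu
  obtain ⟨v, hvA, hv⟩ := geom_mem hAcl hcA hc
  refine ⟨u * v, mul_mem huA hvA, fun x => ?_⟩
  have h1 := DFunLike.congr_fun hv x
  have h2 := hu x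
  simp only [ContinuousMap.mul_apply, ContinuousMap.sub_apply, ContinuousMap.one_apply,
    ContinuousMap.smul_apply, smul_eq_mul, hc_def] at h1 ⊢
  linear_combination (v x) * h2 + h1

lemma norm_le_of_inv {lam : ℂ} {u : C(X, ℂ)} (hu : ∀ x, (lam - h x) * u x = 1)
    {d : ℝ} (hd : 0 < d) (hdist : ∀ x, d ≤ Complex.abs (lam - h x)) : ‖u‖ ≤ d⁻¹ := by
  refine (ContinuousMap.norm_le _ (by positivity)).2 fun x => ?_
  have h1 := hu x
  have h2 : Complex.abs (lam - h x) * Complex.abs (u x) = 1 := by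
    rw [← map_mul, h1, map_one]
  have h3 : 0 < Complex.abs (lam - h x) := lt_of_lt_of_le hd (hdist x)
  rw [Complex.norm_eq_abs]
  rw [show Complex.abs (u x) = (Complex.abs (lam - h x))⁻¹ by field_simp at h2 ⊢; linarith [h2]]
  exact inv_anti₀ hd (hdist x)

lemma rinv_line [Nonempty X] (hAcl : IsClosed (A : Set C(X, ℂ))) (hh : h ∈ A) (b : ℝ)
    (hb : ∀ x, (h x).re ≠ b) : ∀ lam : ℂ, lam.re = b → Rinv A h lam := by
  -- minimum distance to the range of h
  have hdist : ∀ lam : ℂ, lam.re = b → ∃ d > 0, ∀ x, d ≤ Complex.abs (lam - h x) := by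
    intro lam hlam
    obtain ⟨x₀, -, hx₀⟩ := isCompact_univ.exists_isMinOn univ_nonempty
      (Continuous.continuousOn (by continuity : Continuous fun x : X => Complex.abs (lam - h x)))
    refine ⟨Complex.abs (lam - h x₀), ?_, fun x => isMinOn_iff.1 hx₀ x trivial⟩
    have : lam - h x₀ ≠ 0 := by
      intro h0
      have : lam = h x₀ := by linear_combination h0
      exact hb x₀ (by rw [← this, hlam])
    simpa using this
  set U₁ : Set ℂ := {lam | (∃ d > 0, ∀ x, d ≤ Complex.abs (lam - h x)) ∧ Rinv A h lam} with hU₁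
  set U₂ : Set ℂ := {lam | (∃ d > 0, ∀ x, d ≤ Complex.abs (lam - h x)) ∧ ¬Rinv A h lam} with hU₂
  have hO₁ : IsOpen U₁ := by
    rw [Metric.isOpen_iff]
    rintro lam ⟨⟨d, hd, hdle⟩, u, huA, hu⟩
    refine ⟨min (d / 2) (1 / (‖u‖ + 1)), by positivity, fun mu hmu => ?_⟩
    rw [Metric.mem_ball, Complex.dist_eq] at hmu
    have hmu1 : Complex.abs (mu - lam) < d / 2 := lt_of_lt_of_le hmu (min_le_left _ _)
    have hmu2 : Complex.abs (mu - lam) < 1 / (‖u‖ + 1) := lt_of_lt_of_le hmu (min_le_right _ _)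
    constructor
    · refine ⟨d / 2, by positivity, fun x => ?_⟩
      have h1 := hdle x
      have h2 : Complex.abs (lam - h x) ≤ Complex.abs (lam - mu) + Complex.abs (mu - h x) := by
        simpa using Complex.abs.add_le (lam - mu) (mu - h x)
      have h3 : Complex.abs (lam - mu) = Complex.abs (mu - lam) := by
        rw [← Complex.abs.map_neg]; ring_nf
      linarith
    · refine rinv_perturb hAcl huA hu ?_
      have h3 : Complex.abs (lam - mu) = Complex.abs (mu - lam) := by
        rw [← Complex.abs.map_neg]; ring_nf
      rw [h3]
      have hun : (0:ℝ) ≤ ‖u‖ := norm_nonneg _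
      calc Complex.abs (mu - lam) * ‖u‖ ≤ Complex.abs (mu - lam) * (‖u‖ + 1) := by
            nlinarith [Complex.abs.nonneg (mu - lam)]
        _ < (1 / (‖u‖ + 1)) * (‖u‖ + 1) := by
            apply mul_lt_mul_of_pos_right hmu2; positivity
        _ = 1 := by field_simp
  have hO₂ : IsOpen U₂ := by
    rw [Metric.isOpen_iff]
    rintro lam ⟨⟨d, hd, hdle⟩, hnr⟩
    refine ⟨d / 4, by positivity, fun mu hmu => ?_⟩
    rw [Metric.mem_ball, Complex.dist_eq, Complex.norm_eq_abs] at hmu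
    have habs : Complex.abs (lam - mu) = Complex.abs (mu - lam) := by
      rw [← Complex.abs.map_neg]; ring_nf
    have hge : ∀ x, d / 2 ≤ Complex.abs (mu - h x) := by
      intro x
      have h1 := hdle x
      have h2 : Complex.abs (lam - h x) ≤ Complex.abs (lam - mu) + Complex.abs (mu - h x) := by
        simpa using Complex.abs.add_le (lam - mu) (mu - h x)
      rw [habs] at h2
      linarith
    refine ⟨⟨d / 2, by positivity, hge⟩, fun hr => ?_⟩
    obtain ⟨u, huA, hu⟩ := hr
    have hnu : ‖u‖ ≤ (d / 2)⁻¹ := norm_le_of_inv hu (by positivity) hge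
    refine hnr (rinv_perturb hAcl huA hu ?_)
    calc Complex.abs (mu - lam) * ‖u‖ ≤ Complex.abs (mu - lam) * (d / 2)⁻¹ := by
          apply mul_le_mul_of_nonneg_left hnu (Complex.abs.nonneg _)
      _ < (d / 4) * (d / 2)⁻¹ := by
          apply mul_lt_mul_of_pos_right hmu; positivity
      _ = 1 / 2 := by field_simp; ring
      _ < 1 := by norm_num
  -- the line is preconnected
  set L : Set ℂ := {z : ℂ | z.re = b} with hL
  have hLpre : IsPreconnected L := by
    have himg : L = (fun t : ℝ => (b : ℂ) + t * Complex.I) '' univ := by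
      ext z
      simp only [hL, mem_setOf_eq, image_univ, mem_range]
      constructor
      · intro hz
        refine ⟨z.im, ?_⟩
        apply Complex.ext <;> simp [hz]
      · rintro ⟨t, rfl⟩; simp
    rw [himg]
    exact isPreconnected_univ.image _
      (Continuous.continuousOn (by continuity : Continuous fun t : ℝ => (b : ℂ) + t * Complex.I))
  -- a far away point of the line is in U₁
  have hz₀ : ((b : ℂ) + (‖h‖ + |b| + 1) * Complex.I) ∈ L ∩ U₁ := by
    constructor
    · simp [hL]
    · have hre : ((b : ℂ) + (‖h‖ + |b| + 1) * Complex.I).re = b := by simp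
      have habs : ‖h‖ < Complex.abs ((b : ℂ) + (‖h‖ + |b| + 1) * Complex.I) := by
        have him : ((b : ℂ) + (‖h‖ + |b| + 1) * Complex.I).im = ‖h‖ + |b| + 1 := by simp
        have h1 : |((b : ℂ) + (‖h‖ + |b| + 1) * Complex.I).im|
            ≤ Complex.abs ((b : ℂ) + (‖h‖ + |b| + 1) * Complex.I) :=
          Complex.abs_im_le_abs _
        rw [him] at h1
        have h2 : |‖h‖ + |b| + 1| = ‖h‖ + |b| + 1 := abs_of_pos (by positivity)
        rw [h2] at h1
        have : (0:ℝ) ≤ |b| := abs_nonneg b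
        linarith
      exact ⟨hdist _ hre, rinv_of_norm_lt hAcl hh habs⟩
  intro lam hlam
  by_contra hnr
  have hlamU₂ : lam ∈ L ∩ U₂ := ⟨hlam, hdist lam hlam, hnr⟩
  have hsub : L ⊆ U₁ ∪ U₂ := by
    intro z hz
    by_cases hr : Rinv A h z
    · exact Or.inl ⟨hdist z hz, hr⟩
    · exact Or.inr ⟨hdist z hz, hr⟩
  obtain ⟨z, -, hz₁, hz₂⟩ := hLpre U₁ U₂ hO₁ hO₂ hsub ⟨_, hz₀⟩ ⟨lam, hlamU₂⟩
  exact hz₂.2 hz₁.2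

/-- The idempotent lemma: if `Re ∘ h` omits the value `b`, the characteristic function of
`{Re h < b}` belongs to `A`. -/
lemma chi_mem_of_re_ne (hAcl : IsClosed (A : Set C(X, ℂ))) (hh : h ∈ A) (b : ℝ)
    (hb : ∀ x, (h x).re ≠ b) :
    ∃ e ∈ A, ∀ x, e x = if (h x).re < b then (1 : ℂ) else 0 := by
  cases isEmpty_or_nonempty X with
  | inl hX => exact ⟨0, zero_mem A, fun x => isEmptyElim x⟩
  | inr hX =>
  set H : Set X := {x | (h x).re < b} with hH_def
  by_cases hHne : H.Nonempty
  swap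
  · refine ⟨0, zero_mem A, fun x => ?_⟩
    have : ¬((h x).re < b) := fun hx => hHne ⟨x, hx⟩
    simp [this]
  by_cases hHcne : Hᶜ.Nonempty
  swap
  · refine ⟨1, one_mem A, fun x => ?_⟩
    have hx : x ∈ H := by
      by_contra hx; exact hHcne ⟨x, hx⟩
    simp only [hH_def, mem_setOf_eq] at hx
    simp [hx]
  -- setup of the Möbius transform, `a` the pole, `mu` its mirror image
  set a : ℝ := max b ‖h‖ + 1 with ha_def
  have hba : b < a := lt_of_le_of_lt (le_max_left _ _) (lt_add_one _)
  have hha : ‖h‖ < a := lt_of_le_of_lt (le_max_right _ _) (lt_add_one _)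
  have ha0 : 0 < a := lt_of_le_of_lt (norm_nonneg h) hha
  set mu : ℝ := 2 * b - a with hmu_def
  obtain ⟨va, hvaA, hva⟩ : Rinv A h (a : ℂ) := by
    refine rinv_of_norm_lt hAcl hh ?_
    rwa [Complex.abs_ofReal, abs_of_pos ha0]
  have hza : ∀ x, h x ≠ (a : ℂ) := by
    intro x hEq
    have h1 : Complex.abs (h x) ≤ ‖h‖ := by
      simpa [Complex.norm_eq_abs] using h.norm_coe_le_norm x
    rw [hEq, Complex.abs_ofReal, abs_of_pos ha0] at h1
    linarith
  set g : C(X, ℂ) := -((h - algebraMap ℂ C(X, ℂ) (mu : ℂ)) * va) with hg_def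
  have hgA : g ∈ A := neg_mem (mul_mem (sub_mem hh (Subalgebra.algebraMap_mem A _)) hvaA)
  have hgx : ∀ x, g x = (h x - (mu : ℂ)) / (h x - (a : ℂ)) := by
    intro x
    have hinv : ((a : ℂ) - h x)⁻¹ = va x := inv_eq_of_mul_eq_one_right (hva x)
    have hne : (a : ℂ) - h x ≠ 0 := sub_ne_zero.2 (Ne.symm (hza x))
    have hne' : h x - (a : ℂ) ≠ 0 := sub_ne_zero.2 (hza x)
    simp only [hg_def, ContinuousMap.neg_apply, ContinuousMap.mul_apply,
      ContinuousMap.sub_apply]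
    have halg : (algebraMap ℂ C(X, ℂ) (mu : ℂ)) x = (mu : ℂ) := rfl
    rw [halg, ← hinv]
    field_simp
    ring
  -- modulus of g vs position relative to the line
  have key : ∀ x, ((h x).re < b → Complex.abs (g x) < 1) ∧
      (b < (h x).re → 1 < Complex.abs (g x)) := by
    intro x
    have hne' : h x - (a : ℂ) ≠ 0 := sub_ne_zero.2 (hza x)
    have hden : 0 < Complex.abs (h x - (a : ℂ)) := Complex.abs.pos hne'
    have habs : Complex.abs (g x) = Complex.abs (h x - (mu : ℂ)) / Complex.abs (h x - (a : ℂ)) := by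
      rw [hgx, map_div₀]
    constructor
    · intro hlt
      rw [habs, div_lt_one hden, Complex.abs_apply, Complex.abs_apply]
      apply Real.sqrt_lt_sqrt (Complex.normSq_nonneg _)
      simp only [Complex.normSq_apply, Complex.sub_re, Complex.sub_im, Complex.ofReal_re,
        Complex.ofReal_im, hmu_def]
      nlinarith [mul_pos (sub_pos.2 hba) (sub_pos.2 hlt)]
    · intro hlt
      rw [habs, one_lt_div hden, Complex.abs_apply, Complex.abs_apply]
      apply Real.sqrt_lt_sqrt (Complex.normSq_nonneg _)
      simp only [Complex.normSq_apply, Complex.sub_re, Complex.sub_im, Complex.ofReal_re,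
        Complex.ofReal_im, hmu_def]
      nlinarith [mul_pos (sub_pos.2 hba) (sub_pos.2 hlt)]
  -- extremes of |g| on H and Hᶜ
  have hHclosed : IsClosed H := by
    have : H = {x | (h x).re ≤ b} := by
      ext x
      simp only [hH_def, mem_setOf_eq]
      exact ⟨fun hx => le_of_lt hx, fun hx => lt_of_le_of_ne hx (hb x)⟩
    rw [this]
    exact isClosed_le (Complex.continuous_re.comp h.continuous) continuous_const
  have hHopen : IsOpen H :=
    isOpen_lt (Complex.continuous_re.comp h.continuous) continuous_const
  have hgabs_cont : Continuous fun x => Complex.abs (g x) := Complex.continuous_abs.comp g.continuous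
  obtain ⟨x₁, hx₁H, hx₁⟩ := hHclosed.isCompact.exists_isMaxOn hHne hgabs_cont.continuousOn
  obtain ⟨x₂, hx₂H, hx₂⟩ := (hHopen.isClosed_compl).isCompact.exists_isMinOn hHcne
    hgabs_cont.continuousOn
  set r : ℝ := Complex.abs (g x₁) with hr_def
  set ρ : ℝ := Complex.abs (g x₂) with hρ_def
  have hr1 : r < 1 := (key x₁).1 hx₁H
  have hr0 : 0 ≤ r := Complex.abs.nonneg _
  have hrle : ∀ x ∈ H, Complex.abs (g x) ≤ r := fun x hx => isMaxOn_iff.1 hx₁ x hx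
  have hρ1 : 1 < ρ := by
    refine (key x₂).2 ?_
    exact lt_of_le_of_ne (not_lt.1 hx₂H) (Ne.symm (hb x₂))
  have hρle : ∀ x ∈ Hᶜ, ρ ≤ Complex.abs (g x) := fun x hx => isMinOn_iff.1 hx₂ x hx
  -- the characteristic function
  have hχcont : Continuous fun x => if (h x).re < b then (1 : ℂ) else 0 := by
    apply continuous_if ?_ continuous_const.continuousOn continuous_const.continuousOn
    have hclopen : IsClopen H := ⟨hHclosed, hHopen⟩
    intro x hx
    rw [show {x | (h x).re < b} = H from rfl] at hx
    rw [hclopen.frontier_eq] at hx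
    exact absurd hx (notMem_empty x)
  set χ : C(X, ℂ) := ⟨fun x => if (h x).re < b then (1 : ℂ) else 0, hχcont⟩ with hχ_def
  -- main approximation step
  have hmem : (χ : C(X, ℂ)) ∈ closure (A : Set C(X, ℂ)) := by
    rw [Metric.mem_closure_iff]
    intro ε hε
    -- choose n large
    have hr_lim : Tendsto (fun n : ℕ => r ^ n) atTop (𝓝 0) :=
      tendsto_pow_atTop_nhds_zero_of_lt_one hr0 hr1
    have hρ_lim : Tendsto (fun n : ℕ => ρ ^ n) atTop atTop :=
      tendsto_pow_atTop_atTop_of_one_lt hρ1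
    obtain ⟨n, hn1, hn2, hn3⟩ :=
      ((hr_lim.eventually_lt_const (show (0:ℝ) < min (1/2) (ε/4) by positivity)).and
        ((hρ_lim.eventually_gt_atTop (1 + 2/ε)).and (eventually_gt_atTop 0))).exists
    -- roots of unity for this n
    have hnC : (n : ℂ) ≠ 0 := Nat.cast_ne_zero.2 hn3.ne'
    set ξ : ℂ := Complex.exp (2 * Real.pi * Complex.I / n) with hξ_def
    set η : ℂ := Complex.exp (Real.pi * Complex.I / n) with hη_def
    have hξprim : IsPrimitiveRoot ξ n := Complex.isPrimitiveRoot_exp n hn3.ne'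
    have hηn : η ^ n = -1 := by
      rw [hη_def, ← Complex.exp_nat_mul]
      rw [show (n : ℂ) * (Real.pi * Complex.I / n) = Real.pi * Complex.I by field_simp]
      exact Complex.exp_pi_mul_I
    have hξabs : Complex.abs ξ = 1 := by
      rw [hξ_def, show 2 * (Real.pi : ℂ) * Complex.I / n = ((2 * Real.pi / n : ℝ) : ℂ) * Complex.I
        by push_cast; ring]
      exact Complex.abs_exp_ofReal_mul_I _
    have hηabs : Complex.abs η = 1 := by
      rw [hη_def, show (Real.pi : ℂ) * Complex.I / n = ((Real.pi / n : ℝ) : ℂ) * Complex.I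
        by push_cast; ring]
      exact Complex.abs_exp_ofReal_mul_I _
    have hpoly : ∀ t : ℂ, t ^ n + 1 = ∏ k ∈ Finset.range n, (t - ξ ^ k * η) := by
      intro t
      have hP := X_pow_sub_C_eq_prod hξprim hn3 hηn
      have h2 := congrArg (Polynomial.eval t) hP
      simpa [Polynomial.eval_prod, sub_neg_eq_add] using h2
    -- inverse elements
    have hex : ∀ k : ℕ, ∃ u ∈ A, ∀ x, (g x - ξ ^ k * η) * u x = 1 := by
      intro k
      set w : ℂ := ξ ^ k * η with hw_def
      have hwabs : Complex.abs w = 1 := by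
        rw [hw_def, map_mul, map_pow, hξabs, hηabs, one_pow, one_mul]
      have hw0 : w ≠ 0 := by
        intro h0; rw [h0] at hwabs; simp at hwabs
      have hwn : w ^ n = -1 := by
        rw [hw_def, mul_pow, ← pow_mul, mul_comm k n, pow_mul, hξprim.pow_eq_one, one_pow,
          one_mul, hηn]
      have hwne1 : w ≠ 1 := by
        intro h1; rw [h1, one_pow] at hwn; norm_num at hwn
      have hw1 : w - 1 ≠ 0 := sub_ne_zero.2 hwne1
      clear_value w
      set ζ : ℂ := (w * a - mu) / (w - 1) with hζ_def
      have hnormSqw : Complex.normSq w = 1 := by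
        rw [← Complex.sq_abs, hwabs, one_pow]
      have hw2 : w.re * w.re + w.im * w.im = 1 := by
        rw [← Complex.normSq_apply, hnormSqw]
      have hwr1 : w.re ≠ 1 := by
        intro hre
        apply hwne1
        apply Complex.ext
        · exact hre
        · have : w.im * w.im = 0 := by nlinarith
          have him : w.im = 0 := by nlinarith
          simp [him]
      have hDne : Complex.normSq (w - 1) ≠ 0 := by
        simp only [Complex.normSq_apply, Complex.sub_re, Complex.sub_im, Complex.one_re,
          Complex.one_im]
        intro hD
        apply hwr1
        nlinarith
      have hζre : ζ.re = b := by
        rw [hζ_def, Complex.div_re]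
        simp only [Complex.sub_re, Complex.sub_im, Complex.mul_re, Complex.mul_im,
          Complex.ofReal_re, Complex.ofReal_im, Complex.one_re, Complex.one_im,
          Complex.normSq_apply]
        have hDne' : (w.re - 1) * (w.re - 1) + (w.im - 0) * (w.im - 0) ≠ 0 := by
          simpa only [Complex.normSq_apply, Complex.sub_re, Complex.sub_im, Complex.one_re,
            Complex.one_im] using hDne
        rw [← add_div, div_eq_iff hDne']
        rw [hmu_def]
        ring_nf
        nlinarith [hw2]
      have hζmul : ζ * (w - 1) = w * a - mu := div_mul_cancel₀ _ hw1
      clear_value ζ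
      obtain ⟨uζ, huζA, huζ⟩ := rinv_line hAcl hh b hb ζ hζre
      refine ⟨((w - 1)⁻¹ : ℂ) • ((h - algebraMap ℂ C(X, ℂ) (a : ℂ)) * uζ), ?_, ?_⟩
      · exact Subalgebra.smul_mem A
          (mul_mem (sub_mem hh (Subalgebra.algebraMap_mem A _)) huζA) _
      intro x
      have hinvζ : (ζ - h x)⁻¹ = uζ x := inv_eq_of_mul_eq_one_right (huζ x)
      have hzζ : ζ - h x ≠ 0 := by
        rw [sub_ne_zero]; intro hEq
        exact hb x (by rw [← hEq, hζre])
      have hne' : h x - (a : ℂ) ≠ 0 := sub_ne_zero.2 (hza x)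
      simp only [ContinuousMap.smul_apply, ContinuousMap.mul_apply,
        ContinuousMap.sub_apply, smul_eq_mul]
      have halg : (algebraMap ℂ C(X, ℂ) (a : ℂ)) x = (a : ℂ) := rfl
      rw [halg, ← hinvζ]
      have e0 : g x * (h x - (a : ℂ)) = h x - (mu : ℂ) := by
        rw [hgx, div_mul_cancel₀ _ hne']
      have e1 : (g x - w) * (h x - (a : ℂ)) = (w - 1) * (ζ - h x) := by
        linear_combination e0 - hζmul
      calc (g x - w) * ((w - 1)⁻¹ * ((h x - (a:ℂ)) * (ζ - h x)⁻¹))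
          = ((g x - w) * (h x - (a:ℂ))) * ((w - 1)⁻¹ * (ζ - h x)⁻¹) := by ring
        _ = ((w - 1) * (ζ - h x)) * ((w - 1)⁻¹ * (ζ - h x)⁻¹) := by rw [e1]
        _ = 1 := by field_simp
    choose U hUA hU using hex
    set en : C(X, ℂ) := ∏ k ∈ Finset.range n, U k with hen_def
    have henA : en ∈ A := prod_mem fun k _ => hUA k
    have hen_apply : ∀ x, en x = ∏ k ∈ Finset.range n, U k x := by
      intro x
      simp only [hen_def, ContinuousMap.coe_prod, Finset.prod_apply]
    have hprod : ∀ x, (g x ^ n + 1) * en x = 1 := by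
      intro x
      rw [hen_apply, hpoly (g x), ← Finset.prod_mul_distrib]
      exact Finset.prod_eq_one fun k _ => hU k x
    refine ⟨en, henA, ?_⟩
    rw [ContinuousMap.dist_lt_iff hε]
    intro x
    have hnorm_prod : ‖g x ^ n + 1‖ * ‖en x‖ = 1 := by
      rw [← norm_mul, hprod x, norm_one]
    have hen_nn : (0:ℝ) ≤ ‖en x‖ := norm_nonneg _
    by_cases hxH : x ∈ H
    · have hgr : Complex.abs (g x) ≤ r := hrle x hxH
      have hgn : ‖g x ^ n‖ ≤ r ^ n := by
        rw [Complex.norm_eq_abs, map_pow]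
        exact pow_le_pow_left₀ (Complex.abs.nonneg _) hgr n
      have hrn2 : r ^ n < 1 / 2 := lt_of_lt_of_le hn1 (min_le_left _ _)
      have hrn4 : r ^ n < ε / 4 := lt_of_lt_of_le hn1 (min_le_right _ _)
      have hlow : 1 - r ^ n ≤ ‖g x ^ n + 1‖ := by
        have h1 : ‖(g x ^ n + 1) + -(g x ^ n)‖ ≤ ‖g x ^ n + 1‖ + ‖-(g x ^ n)‖ := norm_add_le _ _
        rw [show (g x ^ n + 1) + -(g x ^ n) = 1 by ring, norm_one, norm_neg] at h1
        linarith [hgn]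
      have hen2 : ‖en x‖ ≤ 2 := by
        nlinarith [hnorm_prod, hlow, hrn2, hen_nn]
      have hχx : χ x = 1 := by
        simp only [hχ_def, ContinuousMap.coe_mk]
        exact if_pos (show (h x).re < b from hxH)
      rw [dist_eq_norm, hχx]
      have hdiff : (1 : ℂ) - en x = g x ^ n * en x := by linear_combination (hprod x).symm
      calc ‖(1:ℂ) - en x‖ = ‖g x ^ n‖ * ‖en x‖ := by rw [hdiff, norm_mul]
        _ ≤ r ^ n * 2 := by
            apply mul_le_mul hgn hen2 hen_nn (by positivity)
        _ < ε := by linarith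
    · have hgr : ρ ≤ Complex.abs (g x) := hρle x hxH
      have hgn : ρ ^ n ≤ ‖g x ^ n‖ := by
        rw [Complex.norm_eq_abs, map_pow]
        exact pow_le_pow_left₀ (by linarith : (0:ℝ) ≤ ρ) hgr n
      have hlow : ρ ^ n - 1 ≤ ‖g x ^ n + 1‖ := by
        have h1 : ‖(g x ^ n + 1) + -(1:ℂ)‖ ≤ ‖g x ^ n + 1‖ + ‖-(1:ℂ)‖ := norm_add_le _ _
        rw [show (g x ^ n + 1) + -(1:ℂ) = g x ^ n by ring, norm_neg, norm_one] at h1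
        linarith
      have hχx : χ x = 0 := by
        simp only [hχ_def, ContinuousMap.coe_mk]
        exact if_neg (show ¬((h x).re < b) from hxH)
      rw [dist_eq_norm, hχx, zero_sub, norm_neg]
      have hNgt : 2 / ε < ‖g x ^ n + 1‖ := by linarith
      have hεN : 2 < ‖g x ^ n + 1‖ * ε := (div_lt_iff₀ hε).1 hNgt
      have hNpos : 0 < ‖g x ^ n + 1‖ := by nlinarith [hεN, hε]
      nlinarith [hnorm_prod, hεN, hNpos, hen_nn]
  refine ⟨χ, ?_, fun x => rfl⟩
  rwa [hAcl.closure_eq] at hmem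

end RinvSec

/-- If a continuous real function on a compact set covers an interval, there is a
nonempty perfect subset. -/
lemma exists_perfect_of_covers_Icc {Y : Type*} [TopologicalSpace Y] [T2Space Y]
    {C : Set Y} (hC : IsCompact C) {φ : Y → ℝ} (hφ : Continuous φ) {b₁ b₂ : ℝ}
    (h12 : b₁ < b₂) (hsub : Icc b₁ b₂ ⊆ φ '' C) :
    ∃ P : Set Y, Perfect P ∧ P.Nonempty ∧ P ⊆ C := by
  set S : Set (Set Y) := {D | D ⊆ C ∧ IsCompact D ∧ Icc b₁ b₂ ⊆ φ '' D} with hS_def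
  have hzorn : ∃ m, m ⊆ C ∧ Minimal (· ∈ S) m := by
    refine zorn_superset_nonempty S ?_ C ⟨Subset.rfl, hC, hsub⟩
    intro c hcS hchain hcne
    obtain ⟨D₀, hD₀⟩ := hcne
    haveI : Nonempty c := ⟨⟨D₀, hD₀⟩⟩
    have hsubC : ⋂₀ c ⊆ C := (sInter_subset_of_mem hD₀).trans (hcS hD₀).1
    have hclosed : IsClosed (⋂₀ c) :=
      isClosed_sInter fun D hD => ((hcS hD).2.1).isClosed
    have hcompact : IsCompact (⋂₀ c) := (hcS hD₀).2.1.of_isClosed_subset hclosed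
      (sInter_subset_of_mem hD₀)
    refine ⟨⋂₀ c, ⟨hsubC, hcompact, ?_⟩, fun D hD => sInter_subset_of_mem hD⟩
    intro q hq
    set t : c → Set Y := fun D => (D : Set Y) ∩ φ ⁻¹' {q} with ht_def
    have htd : Directed (· ⊇ ·) t := by
      intro D₁ D₂
      rcases hchain.total D₁.2 D₂.2 with h | h
      · exact ⟨D₁, fun y hy => hy, fun y hy => ⟨h hy.1, hy.2⟩⟩
      · exact ⟨D₂, fun y hy => ⟨h hy.1, hy.2⟩, fun y hy => hy⟩
    have htn : ∀ D : c, (t D).Nonempty := by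
      intro D
      obtain ⟨y, hyD, hyq⟩ := (hcS D.2).2.2 hq
      exact ⟨y, hyD, by simpa using hyq⟩
    have htc : ∀ D : c, IsCompact (t D) := fun D =>
      ((hcS D.2).2.1).inter_right ((isClosed_singleton).preimage hφ)
    have htcl : ∀ D : c, IsClosed (t D) := fun D =>
      (((hcS D.2).2.1).isClosed).inter ((isClosed_singleton).preimage hφ)
    obtain ⟨y, hy⟩ := IsCompact.nonempty_iInter_of_directed_nonempty_isCompact_isClosed
      t htd htn htc htcl
    rw [mem_iInter] at hy
    refine ⟨y, ?_, ?_⟩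
    · rw [mem_sInter]
      intro D hD
      exact (hy ⟨D, hD⟩).1
    · simpa using (hy ⟨D₀, hD₀⟩).2
  obtain ⟨M, -, hMS, hMmin⟩ := hzorn
  obtain ⟨hMC, hMcpt, hMcov⟩ := hMS
  have hMne : M.Nonempty := by
    obtain ⟨y, hyM, -⟩ := hMcov (left_mem_Icc.2 h12.le)
    exact ⟨y, hyM⟩
  refine ⟨M, ⟨hMcpt.isClosed, ?_⟩, hMne, hMC⟩
  intro x hxM
  rw [accPt_iff_nhds]
  intro U hU
  by_contra hcon
  push_neg at hcon
  obtain ⟨V, hVU, hVopen, hxV⟩ := mem_nhds_iff.1 hU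
  set M' : Set Y := M ∩ Vᶜ with hM'_def
  have hM'cpt : IsCompact M' := hMcpt.inter_right hVopen.isClosed_compl
  have hM'ne_cov : ¬(Icc b₁ b₂ ⊆ φ '' M') := by
    intro hcov'
    have hM'S : M' ∈ S := ⟨(inter_subset_left).trans hMC, hM'cpt, hcov'⟩
    have := hMmin hM'S inter_subset_left
    exact (this hxM).2 hxV
  obtain ⟨q, hqI, hqn⟩ := not_subset.1 hM'ne_cov
  obtain ⟨x', hx'M, hx'q⟩ := hMcov hqI
  have hx'x : x' = x := by
    by_contra hne
    have hx'M' : x' ∈ M' := by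
      refine ⟨hx'M, fun hx'V => ?_⟩
      exact hne (hcon x' ⟨hVU hx'V, hx'M⟩)
    exact hqn ⟨x', hx'M', hx'q⟩
  have hQsub : Icc b₁ b₂ \ {q} ⊆ φ '' M' := by
    rintro p ⟨hpI, hpq⟩
    obtain ⟨y, hyM, hyq⟩ := hMcov hpI
    refine ⟨y, ⟨hyM, fun hyV => ?_⟩, hyq⟩
    have hyx : y = x := hcon y ⟨hVU hyV, hyM⟩
    apply hpq
    rw [mem_singleton_iff, ← hyq, hyx, ← hx'x]
    exact hx'q
  have hqcl : q ∈ closure (Icc b₁ b₂ \ {q}) := by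
    rcases lt_or_eq_of_le hqI.1 with hlt | heq
    · have hsub2 : Ico b₁ q ⊆ Icc b₁ b₂ \ {q} := by
        rintro p ⟨hp1, hp2⟩
        refine ⟨⟨hp1, hp2.le.trans hqI.2⟩, ?_⟩
        simp only [mem_singleton_iff]
        exact hp2.ne
      have : q ∈ closure (Ico b₁ q) := by
        rw [closure_Ico hlt.ne]
        exact right_mem_Icc.2 hlt.le
      exact closure_mono hsub2 this
    · have hq2 : q < b₂ := by rw [← heq]; exact h12
      have hsub2 : Ioc q b₂ ⊆ Icc b₁ b₂ \ {q} := by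
        rintro p ⟨hp1, hp2⟩
        refine ⟨⟨heq ▸ hp1.le, hp2⟩, ?_⟩
        simp only [mem_singleton_iff]
        exact hp1.ne'
      have : q ∈ closure (Ioc q b₂) := by
        rw [closure_Ioc hq2.ne]
        exact left_mem_Icc.2 hq2.le
      exact closure_mono hsub2 this
  have himg_closed : IsClosed (φ '' M') := (hM'cpt.image hφ).isClosed
  have : q ∈ φ '' M' := by
    rw [← himg_closed.closure_eq]
    exact closure_mono hQsub hqcl
  exact hqn this

/-- Let `X` be compact Hausdorff and non-scattered, `K = ker X` its perfect kernel
(the largest perfect subset, here nonempty), and `A ≤ C(X, ℂ)` a closed subalgebra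
separating points.  With `K̃ = ⋂ {H : H clopen, χ_H ∈ A, K ⊆ H}`, the set `K` is a
boundary for `A↾K̃`: for every `f ∈ A`, `sup_{K̃} |f| = sup_K |f|` — equivalently, the
Šilov boundary of `A↾K̃` is contained in `K`. -/
theorem stmt9 {X : Type*} [TopologicalSpace X] [CompactSpace X] [T2Space X]
    (K : Set X) (hKperf : Perfect K) (hKne : K.Nonempty)
    (hKmax : ∀ P : Set X, Perfect P → P ⊆ K)
    (A : Subalgebra ℂ C(X, ℂ)) (hA : A.SeparatesPoints)
    (hAcl : IsClosed (A : Set C(X, ℂ))) :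
    ∀ f ∈ A,
      sSup ((fun x => ‖f x‖) '' ⋂₀ {H : Set X | IsClopen H ∧ chiMem A H ∧ K ⊆ H}) =
        sSup ((fun x => ‖f x‖) '' K) := by
  intro f hf
  set Kt : Set X := ⋂₀ {H : Set X | IsClopen H ∧ chiMem A H ∧ K ⊆ H} with hKt_def
  have hKsub : K ⊆ Kt := fun x hx => mem_sInter.2 fun H hH => hH.2.2 hx
  have hbddK : BddAbove ((fun x => ‖f x‖) '' K) := by
    refine ⟨‖f‖, ?_⟩
    rintro y ⟨x, -, rfl⟩
    exact f.norm_coe_le_norm x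
  have hbddKt : BddAbove ((fun x => ‖f x‖) '' Kt) := by
    refine ⟨‖f‖, ?_⟩
    rintro y ⟨x, -, rfl⟩
    exact f.norm_coe_le_norm x
  have hKne' : ((fun x => ‖f x‖) '' K).Nonempty := hKne.image _
  have hKtne' : ((fun x => ‖f x‖) '' Kt).Nonempty := (hKne.mono hKsub).image _
  set m : ℝ := sSup ((fun x => ‖f x‖) '' K) with hm_def
  have hm_ub : ∀ x ∈ K, ‖f x‖ ≤ m := fun x hx => le_csSup hbddK ⟨x, hx, rfl⟩
  have hm0 : 0 ≤ m := by
    obtain ⟨x, hx⟩ := hKne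
    exact (norm_nonneg (f x)).trans (hm_ub x hx)
  refine le_antisymm ?_ (csSup_le_csSup hbddKt hKne' (image_mono hKsub))
  refine csSup_le hKtne' ?_
  rintro y ⟨x₀, hx₀, rfl⟩
  by_contra hlt
  push_neg at hlt
  have hlt' : m < ‖f x₀‖ := by simpa using hlt
  -- x₀ ∈ Kt with ‖f x₀‖ > m : we derive a contradiction
  set c : ℂ := f x₀ with hc_def
  have hcm : m < Complex.abs c := by rwa [Complex.norm_eq_abs] at hlt' 
  have hc0 : c ≠ 0 := by
    intro h0
    rw [h0] at hcm
    simp at hcm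
    linarith
  set g₁ : C(X, ℂ) := ((starRingEnd ℂ) c) • f with hg₁_def
  have hg₁A : g₁ ∈ A := Subalgebra.smul_mem A hf _
  have hg₁x₀ : (g₁ x₀).re = Complex.normSq c := by
    simp only [hg₁_def, ContinuousMap.smul_apply, smul_eq_mul, ← hc_def]
    rw [mul_comm, Complex.mul_conj]
    simp
  have hg₁K : ∀ x ∈ K, (g₁ x).re ≤ Complex.abs c * m := by
    intro x hx
    have h1 : (g₁ x).re ≤ Complex.abs (g₁ x) := Complex.re_le_abs _
    have h2 : Complex.abs (g₁ x) = Complex.abs c * Complex.abs (f x) := by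
      simp only [hg₁_def, ContinuousMap.smul_apply, smul_eq_mul, map_mul, Complex.abs_conj]
    have h3 : Complex.abs (f x) ≤ m := by
      rw [← Complex.norm_eq_abs]; exact hm_ub x hx
    have h4 : Complex.abs c * Complex.abs (f x) ≤ Complex.abs c * m :=
      mul_le_mul_of_nonneg_left h3 (Complex.abs.nonneg c)
    linarith
  -- thresholds
  set m' : ℝ := Complex.abs c * m with hm'_def
  set M' : ℝ := Complex.normSq c with hM'_def
  have hm'M' : m' < M' := by
    rw [hm'_def, hM'_def, Complex.normSq_eq_abs, sq]
    exact mul_lt_mul_of_pos_left hcm (Complex.abs.pos hc0)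
  set d : ℝ := (M' - m') / 4 with hd_def
  have hd0 : 0 < d := by rw [hd_def]; linarith
  -- the compact set where re g₁ is large
  set C : Set X := {x | m' + d ≤ (g₁ x).re} with hC_def
  have hCclosed : IsClosed C :=
    isClosed_le continuous_const (Complex.continuous_re.comp g₁.continuous)
  have hCK : ∀ x ∈ C, x ∉ K := by
    intro x hxC hxK
    have := hg₁K x hxK
    have h2 : m' + d ≤ (g₁ x).re := hxC
    linarith
  -- find b in (m'+d, m'+3d) avoided by re ∘ g₁ on C
  have hbex : ∃ b ∈ Icc (m' + 2 * d) (m' + 3 * d), ∀ x ∈ C, (g₁ x).re ≠ b := by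
    by_contra hcon
    push_neg at hcon
    have hcov : Icc (m' + 2 * d) (m' + 3 * d) ⊆ (fun x => (g₁ x).re) '' C := by
      intro q hq
      obtain ⟨x, hxC, hxq⟩ := hcon q hq
      exact ⟨x, hxC, hxq⟩
    obtain ⟨P, hPperf, hPne, hPC⟩ := exists_perfect_of_covers_Icc hCclosed.isCompact
      (Complex.continuous_re.comp g₁.continuous) (by linarith : m' + 2 * d < m' + 3 * d) hcov
    obtain ⟨x, hxP⟩ := hPne
    exact hCK x (hPC hxP) (hKmax P hPperf hxP)
  obtain ⟨b, hbI, hbC⟩ := hbex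
  have hbno : ∀ x, (g₁ x).re ≠ b := by
    intro x
    by_cases hxC : x ∈ C
    · exact hbC x hxC
    · intro hEq
      have : ¬(m' + d ≤ (g₁ x).re) := hxC
      push_neg at this
      rw [hEq] at this
      have := hbI.1
      linarith
  obtain ⟨e, heA, he⟩ := chi_mem_of_re_ne hAcl hg₁A b hbno
  set H : Set X := {x | (g₁ x).re < b} with hH_def
  have hHopen : IsOpen H := isOpen_lt (Complex.continuous_re.comp g₁.continuous) continuous_const
  have hHclosed : IsClosed H := by
    have : H = {x | (g₁ x).re ≤ b} := by
      ext x
      simp only [hH_def, mem_setOf_eq]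
      exact ⟨fun hx => hx.le, fun hx => lt_of_le_of_ne hx (hbno x)⟩
    rw [this]
    exact isClosed_le (Complex.continuous_re.comp g₁.continuous) continuous_const
  have hHmem : H ∈ {H : Set X | IsClopen H ∧ chiMem A H ∧ K ⊆ H} := by
    refine ⟨⟨hHclosed, hHopen⟩, ⟨e, heA, fun x => ?_⟩, fun x hx => ?_⟩
    · rw [he x]
      by_cases hxH : x ∈ H
      · rw [if_pos hxH, if_pos (show (g₁ x).re < b from hxH)]
      · rw [if_neg hxH, if_neg (show ¬((g₁ x).re < b) from hxH)]
    · have h1 := hg₁K x hx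
      have h2 := hbI.1
      simp only [hH_def, mem_setOf_eq]
      linarith
  have hx₀H : x₀ ∈ H := mem_sInter.1 hx₀ H hHmem
  have hx₀H' : (g₁ x₀).re < b := hx₀H
  rw [hg₁x₀] at hx₀H'
  have := hbI.2
  linarith
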